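/- The sixth-order Krall differential expression ℓ_K[y](x) = (x²−1)³y⁽⁶⁾ + 18x(x²−1)²y⁽⁵⁾ + (x²−1)((3A+3B+96)x² − 3A − 3B − 36)y⁽⁴⁾ + (24A+24B+168)x(x²−1)y‴ + ((12AB+42A+42B+72)x² + (12B−12A)x − 12AB − 30A − 30B − 72)y″ + ((24AB+12A+12B)x + 12B − 12A)y′ is equal, for any six-times differentiable function y on (−1,1), to the Lagrangian symmetric form −((1−x²)³y‴)‴ + ((1−x²)(12+(3A+3B+6)(1−x²))y″)″ − (((6A−6B−12AB)x² + (12A−12B)x + 12AB + 18A + 18B + 24)y′)′. -/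

import Mathlib

open Set Filter Topology intervalIntegral

noncomputable def krallAlpha (A B : ℝ) : ℝ := 3*A + 3*B + 6

noncomputable def krallPi (A B : ℝ) (x : ℝ) : ℝ :=
  (-6*A - 6*B - 12*A*B)*x^2 + (12*A - 12*B)*x + (12*A*B + 18*A + 18*B + 24)

/-- The sixth-order Krall differential expression, expanded form. -/
noncomputable def lK (A B : ℝ) (y : ℝ → ℝ) (x : ℝ) : ℝ :=
  (x^2 - 1)^3 * iteratedDeriv 6 y x
  + 18*x*(x^2 - 1)^2 * iteratedDeriv 5 y x
  + (x^2 - 1)*((3*A + 3*B + 96)*x^2 - 3*A - 3*B - 36) * iteratedDeriv 4 y x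
  + (24*A + 24*B + 168)*x*(x^2 - 1) * iteratedDeriv 3 y x
  + ((12*A*B + 42*A + 42*B + 72)*x^2 + (12*B - 12*A)*x - 12*A*B - 30*A - 30*B - 72)
      * iteratedDeriv 2 y x
  + ((24*A*B + 12*A + 12*B)*x + 12*B - 12*A) * deriv y x

/-- The sixth-order Krall differential expression, Lagrangian symmetric form. -/
noncomputable def lKsym (A B : ℝ) (y : ℝ → ℝ) (x : ℝ) : ℝ :=
  - iteratedDeriv 3 (fun t => (1 - t^2)^3 * iteratedDeriv 3 y t) x
  + iteratedDeriv 2 (fun t => (1 - t^2)*(12 + krallAlpha A B * (1 - t^2)) * iteratedDeriv 2 y t) x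
  - deriv (fun t => krallPi A B t * deriv y t) x

/-- Λ[f](x) = −((1−x²)³f‴(x))′ + (1−x²)(12+α(1−x²))f″(x). -/
noncomputable def LamK (A B : ℝ) (f : ℝ → ℝ) (x : ℝ) : ℝ :=
  - deriv (fun t => (1 - t^2)^3 * iteratedDeriv 3 f t) x
  + (1 - x^2)*(12 + krallAlpha A B * (1 - x^2)) * iteratedDeriv 2 f x

/-- [f,1]_K(x) = −((1−x²)³f‴)″ + ((1−x²)(12+α(1−x²))f″)′ − π(x)f′(x). -/
noncomputable def concOne (A B : ℝ) (f : ℝ → ℝ) (x : ℝ) : ℝ :=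
  - iteratedDeriv 2 (fun t => (1 - t^2)^3 * iteratedDeriv 3 f t) x
  + deriv (fun t => (1 - t^2)*(12 + krallAlpha A B * (1 - t^2)) * iteratedDeriv 2 f t) x
  - krallPi A B x * deriv f x

/-- The bilinear concomitant [f,g]_K of the Krall expression (real-valued case). -/
noncomputable def conc (A B : ℝ) (f g : ℝ → ℝ) (x : ℝ) : ℝ :=
  concOne A B f x * g x - concOne A B g x * f x
  - LamK A B f x * deriv g x + LamK A B g x * deriv f x
  - (1 - x^2)^3 * (iteratedDeriv 3 f x * iteratedDeriv 2 g x
      - iteratedDeriv 2 f x * iteratedDeriv 3 g x)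

/-- Derivative of a degree-≤6 polynomial. -/
lemma hasDerivAt_p6 (a0 a1 a2 a3 a4 a5 a6 : ℝ) (t : ℝ) :
    HasDerivAt (fun s : ℝ => a6*s^6+a5*s^5+a4*s^4+a3*s^3+a2*s^2+a1*s+a0)
      (6*a6*t^5+5*a5*t^4+4*a4*t^3+3*a3*t^2+2*a2*t+a1) t := by
  have h :=
    (((((((hasDerivAt_pow 6 t).const_mul a6).add ((hasDerivAt_pow 5 t).const_mul a5)).add
      ((hasDerivAt_pow 4 t).const_mul a4)).add ((hasDerivAt_pow 3 t).const_mul a3)).add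
      ((hasDerivAt_pow 2 t).const_mul a2)).add ((hasDerivAt_id t).const_mul a1)).add_const a0
  refine h.congr_deriv ?_
  push_cast
  ring

lemma derivEqOn {U : Set ℝ} (hU : IsOpen U) {f g : ℝ → ℝ}
    (h : ∀ t ∈ U, f t = g t) : ∀ t ∈ U, deriv f t = deriv g t := fun t ht =>
  Filter.EventuallyEq.deriv_eq (Filter.eventuallyEq_of_mem (hU.mem_nhds ht) h)

lemma iteratedDeriv_three (f : ℝ → ℝ) : iteratedDeriv 3 f = deriv (deriv (deriv f)) := by
  rw [show (3:ℕ) = 2+1 from rfl, iteratedDeriv_succ, show (2:ℕ) = 1+1 from rfl,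
    iteratedDeriv_succ, iteratedDeriv_one]

lemma iteratedDeriv_two' (f : ℝ → ℝ) : iteratedDeriv 2 f = deriv (deriv f) := by
  rw [show (2:ℕ) = 1+1 from rfl, iteratedDeriv_succ, iteratedDeriv_one]

/-- the expanded Krall expression equals its Lagrangian symmetric form. -/
theorem krall_expression_lagrangian_symmetric (A B : ℝ) (hA : 0 < A) (hB : 0 < B)
    (y : ℝ → ℝ) (hy : ContDiffOn ℝ 6 y (Set.Ioo (-1 : ℝ) 1)) :
    ∀ x ∈ Set.Ioo (-1 : ℝ) 1, lK A B y x = lKsym A B y x := by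
  intro x hx
  have hU : IsOpen (Set.Ioo (-1:ℝ) 1) := isOpen_Ioo
  -- iterated derivatives of y are differentiable on the interval
  have hD : ∀ k : ℕ, k < 6 → ∀ t ∈ Set.Ioo (-1:ℝ) 1,
      HasDerivAt (iteratedDeriv k y) (iteratedDeriv (k+1) y t) t := by
    intro k hk t ht
    have heq : ∀ s ∈ Set.Ioo (-1:ℝ) 1,
        iteratedDerivWithin k y (Set.Ioo (-1:ℝ) 1) s = iteratedDeriv k y s := by
      intro s hs
      rw [iteratedDerivWithin_eq_iteratedFDerivWithin, iteratedDeriv_eq_iteratedFDeriv,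
        iteratedFDerivWithin_of_isOpen k hU hs]
    have h1 : DifferentiableWithinAt ℝ (iteratedDerivWithin k y (Set.Ioo (-1:ℝ) 1))
        (Set.Ioo (-1:ℝ) 1) t :=
      hy.differentiableOn_iteratedDerivWithin (by exact_mod_cast hk) hU.uniqueDiffOn t ht
    have h2 : DifferentiableAt ℝ (iteratedDeriv k y) t :=
      (h1.differentiableAt (hU.mem_nhds ht)).congr_of_eventuallyEq
        (Filter.eventuallyEq_of_mem (hU.mem_nhds ht) heq).symm
    rw [iteratedDeriv_succ]
    exact h2.hasDerivAt
  have hDy : ∀ t ∈ Set.Ioo (-1:ℝ) 1, HasDerivAt (deriv y) (iteratedDeriv 2 y t) t := by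
    intro t ht
    have h := hD 1 (by norm_num) t ht
    rwa [iteratedDeriv_one] at h
  -- polynomial coefficient derivatives
  have hq0 : ∀ t : ℝ, HasDerivAt (fun s : ℝ => (1 - s^2)^3) (-6*t^5+12*t^3-6*t) t := by
    intro t
    have h := hasDerivAt_p6 1 0 (-3) 0 3 0 (-1) t
    have e : (fun s:ℝ => (-1)*s^6+0*s^5+3*s^4+0*s^3+(-3)*s^2+0*s+1) = fun s:ℝ => (1 - s^2)^3 := by
      funext s; ring
    rw [e] at h
    convert h using 1; ring
  have hq1 : ∀ t : ℝ, HasDerivAt (fun s : ℝ => -6*s^5+12*s^3-6*s) (-30*t^4+36*t^2-6) t := by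
    intro t
    have h := hasDerivAt_p6 0 (-6) 0 12 0 (-6) 0 t
    have e : (fun s:ℝ => 0*s^6+(-6)*s^5+0*s^4+12*s^3+0*s^2+(-6)*s+0)
        = fun s:ℝ => -6*s^5+12*s^3-6*s := by funext s; ring
    rw [e] at h
    convert h using 1; ring
  have hq2 : ∀ t : ℝ, HasDerivAt (fun s : ℝ => -30*s^4+36*s^2-6) (-120*t^3+72*t) t := by
    intro t
    have h := hasDerivAt_p6 (-6) 0 36 0 (-30) 0 0 t
    have e : (fun s:ℝ => 0*s^6+0*s^5+(-30)*s^4+0*s^3+36*s^2+0*s+(-6))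
        = fun s:ℝ => -30*s^4+36*s^2-6 := by funext s; ring
    rw [e] at h
    convert h using 1; ring
  have hr0 : ∀ t : ℝ, HasDerivAt (fun s : ℝ => (1 - s^2)*(12 + krallAlpha A B * (1 - s^2)))
      (4*krallAlpha A B*t^3 - (24+4*krallAlpha A B)*t) t := by
    intro t
    have h := hasDerivAt_p6 (12+krallAlpha A B) 0 (-(12+2*krallAlpha A B)) 0 (krallAlpha A B) 0 0 t
    have e : (fun s:ℝ => 0*s^6+0*s^5+(krallAlpha A B)*s^4+0*s^3
          +(-(12+2*krallAlpha A B))*s^2+0*s+(12+krallAlpha A B))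
        = fun s:ℝ => (1 - s^2)*(12 + krallAlpha A B * (1 - s^2)) := by funext s; ring
    rw [e] at h
    convert h using 1; ring
  have hr1 : ∀ t : ℝ, HasDerivAt (fun s : ℝ => 4*krallAlpha A B*s^3 - (24+4*krallAlpha A B)*s)
      (12*krallAlpha A B*t^2 - (24+4*krallAlpha A B)) t := by
    intro t
    have h := hasDerivAt_p6 0 (-(24+4*krallAlpha A B)) 0 (4*krallAlpha A B) 0 0 0 t
    have e : (fun s:ℝ => 0*s^6+0*s^5+0*s^4+(4*krallAlpha A B)*s^3+0*s^2
          +(-(24+4*krallAlpha A B))*s+0)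
        = fun s:ℝ => 4*krallAlpha A B*s^3 - (24+4*krallAlpha A B)*s := by funext s; ring
    rw [e] at h
    convert h using 1; ring
  have hpi : ∀ t : ℝ, HasDerivAt (fun s : ℝ => krallPi A B s)
      (2*(-6*A - 6*B - 12*A*B)*t + (12*A - 12*B)) t := by
    intro t
    have h := hasDerivAt_p6 (12*A*B + 18*A + 18*B + 24) (12*A - 12*B) (-6*A - 6*B - 12*A*B)
      0 0 0 0 t
    have e : (fun s:ℝ => 0*s^6+0*s^5+0*s^4+0*s^3+(-6*A - 6*B - 12*A*B)*s^2
          +(12*A - 12*B)*s+(12*A*B + 18*A + 18*B + 24))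
        = fun s:ℝ => krallPi A B s := by funext s; simp only [krallPi]; ring
    rw [e] at h
    convert h using 1; ring
  -- term 1 : third derivative of (1-t²)³ y‴
  have e1 : ∀ t ∈ Set.Ioo (-1:ℝ) 1,
      deriv (fun t => (1 - t^2)^3 * iteratedDeriv 3 y t) t
        = (-6*t^5+12*t^3-6*t) * iteratedDeriv 3 y t + (1 - t^2)^3 * iteratedDeriv 4 y t :=
    fun t ht => ((hq0 t).mul (hD 3 (by norm_num) t ht)).deriv
  have e2 : ∀ t ∈ Set.Ioo (-1:ℝ) 1,
      deriv (fun t => (-6*t^5+12*t^3-6*t) * iteratedDeriv 3 y t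
          + (1 - t^2)^3 * iteratedDeriv 4 y t) t
        = ((-30*t^4+36*t^2-6) * iteratedDeriv 3 y t + (-6*t^5+12*t^3-6*t) * iteratedDeriv 4 y t)
          + ((-6*t^5+12*t^3-6*t) * iteratedDeriv 4 y t + (1 - t^2)^3 * iteratedDeriv 5 y t) :=
    fun t ht => (((hq1 t).mul (hD 3 (by norm_num) t ht)).add
      ((hq0 t).mul (hD 4 (by norm_num) t ht))).deriv
  have e3 : deriv (fun t => ((-30*t^4+36*t^2-6) * iteratedDeriv 3 y t
          + (-6*t^5+12*t^3-6*t) * iteratedDeriv 4 y t)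
          + ((-6*t^5+12*t^3-6*t) * iteratedDeriv 4 y t + (1 - t^2)^3 * iteratedDeriv 5 y t)) x
        = (((-120*x^3+72*x) * iteratedDeriv 3 y x + (-30*x^4+36*x^2-6) * iteratedDeriv 4 y x)
          + ((-30*x^4+36*x^2-6) * iteratedDeriv 4 y x + (-6*x^5+12*x^3-6*x) * iteratedDeriv 5 y x))
          + (((-30*x^4+36*x^2-6) * iteratedDeriv 4 y x
              + (-6*x^5+12*x^3-6*x) * iteratedDeriv 5 y x)
          + ((-6*x^5+12*x^3-6*x) * iteratedDeriv 5 y x + (1 - x^2)^3 * iteratedDeriv 6 y x)) :=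
    ((((hq2 x).mul (hD 3 (by norm_num) x hx)).add ((hq1 x).mul (hD 4 (by norm_num) x hx))).add
      (((hq1 x).mul (hD 4 (by norm_num) x hx)).add
        ((hq0 x).mul (hD 5 (by norm_num) x hx)))).deriv
  have E1 : ∀ t ∈ Set.Ioo (-1:ℝ) 1,
      deriv (deriv (fun t => (1 - t^2)^3 * iteratedDeriv 3 y t)) t
        = ((-30*t^4+36*t^2-6) * iteratedDeriv 3 y t + (-6*t^5+12*t^3-6*t) * iteratedDeriv 4 y t)
          + ((-6*t^5+12*t^3-6*t) * iteratedDeriv 4 y t + (1 - t^2)^3 * iteratedDeriv 5 y t) :=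
    fun t ht => (derivEqOn hU e1 t ht).trans (e2 t ht)
  have key1 : deriv (deriv (deriv (fun t => (1 - t^2)^3 * iteratedDeriv 3 y t))) x
        = (((-120*x^3+72*x) * iteratedDeriv 3 y x + (-30*x^4+36*x^2-6) * iteratedDeriv 4 y x)
          + ((-30*x^4+36*x^2-6) * iteratedDeriv 4 y x + (-6*x^5+12*x^3-6*x) * iteratedDeriv 5 y x))
          + (((-30*x^4+36*x^2-6) * iteratedDeriv 4 y x
              + (-6*x^5+12*x^3-6*x) * iteratedDeriv 5 y x)
          + ((-6*x^5+12*x^3-6*x) * iteratedDeriv 5 y x + (1 - x^2)^3 * iteratedDeriv 6 y x)) :=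
    (derivEqOn hU E1 x hx).trans e3
  -- term 2 : second derivative of (1-t²)(12+α(1-t²)) y″
  have f1 : ∀ t ∈ Set.Ioo (-1:ℝ) 1,
      deriv (fun t => (1 - t^2)*(12 + krallAlpha A B * (1 - t^2)) * iteratedDeriv 2 y t) t
        = (4*krallAlpha A B*t^3 - (24+4*krallAlpha A B)*t) * iteratedDeriv 2 y t
          + (1 - t^2)*(12 + krallAlpha A B * (1 - t^2)) * iteratedDeriv 3 y t :=
    fun t ht => ((hr0 t).mul (hD 2 (by norm_num) t ht)).deriv
  have f2 : deriv (fun t => (4*krallAlpha A B*t^3 - (24+4*krallAlpha A B)*t) * iteratedDeriv 2 y t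
          + (1 - t^2)*(12 + krallAlpha A B * (1 - t^2)) * iteratedDeriv 3 y t) x
        = ((12*krallAlpha A B*x^2 - (24+4*krallAlpha A B)) * iteratedDeriv 2 y x
            + (4*krallAlpha A B*x^3 - (24+4*krallAlpha A B)*x) * iteratedDeriv 3 y x)
          + ((4*krallAlpha A B*x^3 - (24+4*krallAlpha A B)*x) * iteratedDeriv 3 y x
            + (1 - x^2)*(12 + krallAlpha A B * (1 - x^2)) * iteratedDeriv 4 y x) :=
    (((hr1 x).mul (hD 2 (by norm_num) x hx)).add
      ((hr0 x).mul (hD 3 (by norm_num) x hx))).deriv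
  have key2 : deriv (deriv
        (fun t => (1 - t^2)*(12 + krallAlpha A B * (1 - t^2)) * iteratedDeriv 2 y t)) x
        = ((12*krallAlpha A B*x^2 - (24+4*krallAlpha A B)) * iteratedDeriv 2 y x
            + (4*krallAlpha A B*x^3 - (24+4*krallAlpha A B)*x) * iteratedDeriv 3 y x)
          + ((4*krallAlpha A B*x^3 - (24+4*krallAlpha A B)*x) * iteratedDeriv 3 y x
            + (1 - x^2)*(12 + krallAlpha A B * (1 - x^2)) * iteratedDeriv 4 y x) :=
    (derivEqOn hU f1 x hx).trans f2
  -- term 3 : first derivative of π y′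
  have key3 : deriv (fun t => krallPi A B t * deriv y t) x
        = (2*(-6*A - 6*B - 12*A*B)*x + (12*A - 12*B)) * deriv y x
          + krallPi A B x * iteratedDeriv 2 y x :=
    ((hpi x).mul (hDy x hx)).deriv
  simp only [lK, lKsym]
  rw [iteratedDeriv_three (fun t => (1 - t^2)^3 * iteratedDeriv 3 y t),
    iteratedDeriv_two' (fun t => (1 - t^2)*(12 + krallAlpha A B * (1 - t^2)) * iteratedDeriv 2 y t),
    key1, key2, key3]
  simp only [krallAlpha, krallPi]
  ring
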